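/- For the two-qubit classical state ρ_c = t|++⟩⟨++| + (1−t)|−−⟩⟨−−| with 1/2 < t < 1, after Bob applies the amplitude damping channel with parameter γ ∈ [0,1], the maximal steered coherence of the resulting state equals 2tγ√(1−γ) / √((1−2t)²(1−γ) + γ²). In particular it is 0 at γ = 0 and γ = 1, and strictly positive for 0 < γ < 1. -/

import Mathlib

open Matrix BigOperators Kronecker ComplexOrder

noncomputable section

def pauli : Fin 3 → Matrix (Fin 2) (Fin 2) ℂ :=
  ![!![0, 1; 1, 0], !![0, -Complex.I; Complex.I, 0], !![1, 0; 0, -1]]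

def cross3 (u v : Fin 3 → ℝ) : Fin 3 → ℝ :=
  ![u 1 * v 2 - u 2 * v 1, u 2 * v 0 - u 0 * v 2, u 0 * v 1 - u 1 * v 0]

def norm3 (v : Fin 3 → ℝ) : ℝ := Real.sqrt (∑ i, v i ^ 2)

def dot3 (u v : Fin 3 → ℝ) : ℝ := ∑ i, u i * v i

def proj {n : Type*} [Fintype n] (x : n → ℂ) : Matrix n n ℂ :=
  vecMulVec x (star x)

/-- The product vector x ⊗ y. -/
def tensorVec (x y : Fin 2 → ℂ) : Fin 2 × Fin 2 → ℂ := fun p => x p.1 * y p.2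

def plusV : Fin 2 → ℂ := ![(Real.sqrt 2)⁻¹, (Real.sqrt 2)⁻¹]
def minusV : Fin 2 → ℂ := ![(Real.sqrt 2)⁻¹, -(Real.sqrt 2)⁻¹]

/-- Kraus operators of the amplitude damping channel. -/
def AD0 (γ : ℝ) : Matrix (Fin 2) (Fin 2) ℂ := !![1, 0; 0, (Real.sqrt (1 - γ) : ℂ)]
def AD1 (γ : ℝ) : Matrix (Fin 2) (Fin 2) ℂ := !![0, (Real.sqrt γ : ℂ); 0, 0]

lemma L1aux {n : Type*} [Fintype n] [DecidableEq n] (K : Matrix n n ℂ) (x : n → ℂ) :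
    K * proj x * Kᴴ = proj (K *ᵥ x) := by
  ext p q
  simp only [proj, Matrix.mul_apply, vecMulVec_apply, Matrix.conjTranspose_apply,
    Matrix.mulVec, dotProduct, Pi.star_apply, Finset.sum_mul, Finset.mul_sum, star_sum, star_mul']
  exact Finset.sum_congr rfl fun j _ => Finset.sum_congr rfl fun i _ => by ring

lemma L2aux {n : Type*} [Fintype n] (M : Matrix n n ℂ) (x : n → ℂ) :
    (proj x * M).trace = star x ⬝ᵥ (M *ᵥ x) := by
  simp only [proj, Matrix.trace, Matrix.diag, Matrix.mul_apply, vecMulVec_apply,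
    dotProduct, Matrix.mulVec, Pi.star_apply, Finset.mul_sum]
  rw [Finset.sum_comm]
  exact Finset.sum_congr rfl fun q _ => Finset.sum_congr rfl fun p _ => by ring

lemma L3aux (P Q : Matrix (Fin 2) (Fin 2) ℂ) (x y : Fin 2 → ℂ) :
    (P ⊗ₖ Q) *ᵥ tensorVec x y = tensorVec (P *ᵥ x) (Q *ᵥ y) := by
  ext p
  simp only [Matrix.mulVec, dotProduct, tensorVec, Matrix.kroneckerMap_apply,
    Fintype.sum_prod_type, Finset.sum_mul, Finset.mul_sum]
  rw [Finset.sum_comm]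
  exact Finset.sum_congr rfl fun i _ => Finset.sum_congr rfl fun j _ => by ring

lemma L4aux (x y w z : Fin 2 → ℂ) :
    star (tensorVec x y) ⬝ᵥ tensorVec w z = (star x ⬝ᵥ w) * (star y ⬝ᵥ z) := by
  simp only [dotProduct, tensorVec, Pi.star_apply, star_mul', Fintype.sum_prod_type,
    Finset.sum_mul, Finset.mul_sum]
  rw [Finset.sum_comm]
  exact Finset.sum_congr rfl fun i _ => Finset.sum_congr rfl fun j _ => by ring

lemma keyaux (t γ : ℝ)
    (ρc ρ' : Matrix (Fin 2 × Fin 2) (Fin 2 × Fin 2) ℂ)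
    (hρc : ρc = (t : ℂ) • proj (tensorVec plusV plusV) +
      ((1 - t : ℝ) : ℂ) • proj (tensorVec minusV minusV))
    (hρ' : ρ' = ((1 : Matrix (Fin 2) (Fin 2) ℂ) ⊗ₖ AD0 γ) * ρc * ((1 : Matrix (Fin 2) (Fin 2) ℂ) ⊗ₖ AD0 γ)ᴴ +
      ((1 : Matrix (Fin 2) (Fin 2) ℂ) ⊗ₖ AD1 γ) * ρc * ((1 : Matrix (Fin 2) (Fin 2) ℂ) ⊗ₖ AD1 γ)ᴴ)
    (P Q : Matrix (Fin 2) (Fin 2) ℂ) :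
    (ρ' * (P ⊗ₖ Q)).trace =
      (t : ℂ) * ((star plusV ⬝ᵥ (P *ᵥ plusV)) *
        ((star (AD0 γ *ᵥ plusV) ⬝ᵥ (Q *ᵥ (AD0 γ *ᵥ plusV))) +
         (star (AD1 γ *ᵥ plusV) ⬝ᵥ (Q *ᵥ (AD1 γ *ᵥ plusV))))) +
      ((1 - t : ℝ) : ℂ) * ((star minusV ⬝ᵥ (P *ᵥ minusV)) *
        ((star (AD0 γ *ᵥ minusV) ⬝ᵥ (Q *ᵥ (AD0 γ *ᵥ minusV))) +
         (star (AD1 γ *ᵥ minusV) ⬝ᵥ (Q *ᵥ (AD1 γ *ᵥ minusV))))) := by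
  have expand : ∀ (A : Matrix (Fin 2) (Fin 2) ℂ) (x : Fin 2 → ℂ),
      ((1 : Matrix (Fin 2) (Fin 2) ℂ) ⊗ₖ A) *ᵥ tensorVec x x = tensorVec x (A *ᵥ x) := by
    intro A x
    rw [L3aux]
    simp [Matrix.one_mulVec]
  subst hρ' hρc
  simp only [Matrix.mul_add, Matrix.add_mul, Matrix.mul_smul, Matrix.smul_mul,
    Matrix.trace_add, Matrix.trace_smul, L1aux, expand, L2aux, L3aux, L4aux, smul_eq_mul]
  ring

set_option maxHeartbeats 1600000 in
theorem stmt6 (t γ : ℝ) (ht : 1 / 2 < t) (ht1 : t < 1) (hγ0 : 0 ≤ γ) (hγ1 : γ ≤ 1)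
    (ρc ρ' : Matrix (Fin 2 × Fin 2) (Fin 2 × Fin 2) ℂ)
    (hρc : ρc = (t : ℂ) • proj (tensorVec plusV plusV) +
      ((1 - t : ℝ) : ℂ) • proj (tensorVec minusV minusV))
    (hρ' : ρ' = ((1 : Matrix (Fin 2) (Fin 2) ℂ) ⊗ₖ AD0 γ) * ρc * ((1 : Matrix (Fin 2) (Fin 2) ℂ) ⊗ₖ AD0 γ)ᴴ +
      ((1 : Matrix (Fin 2) (Fin 2) ℂ) ⊗ₖ AD1 γ) * ρc * ((1 : Matrix (Fin 2) (Fin 2) ℂ) ⊗ₖ AD1 γ)ᴴ)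
    (a b : Fin 3 → ℝ) (T : Matrix (Fin 3) (Fin 3) ℝ)
    (ha : ∀ i, a i = ((ρ' * (pauli i ⊗ₖ 1)).trace).re)
    (hb : ∀ j, b j = ((ρ' * ((1 : Matrix (Fin 2) (Fin 2) ℂ) ⊗ₖ pauli j)).trace).re)
    (hT : ∀ i j, T i j = ((ρ' * (pauli i ⊗ₖ pauli j)).trace).re)
    (v : ℝ)
    (hv : v = 2 * t * γ * Real.sqrt (1 - γ) /
      Real.sqrt ((1 - 2 * t) ^ 2 * (1 - γ) + γ ^ 2)) :
    IsGreatest {c | ∃ m : Fin 3 → ℝ, norm3 m = 1 ∧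
        c = norm3 (cross3 (fun j => ∑ i, T i j * m i) (fun i => b i / norm3 b)) /
          |1 + dot3 a m|} v ∧
      (γ = 0 → v = 0) ∧ (γ = 1 → v = 0) ∧ (0 < γ → γ < 1 → 0 < v) := by
  -- abbreviations
  have hsp : Real.sqrt (1-γ) ^ 2 = 1-γ := Real.sq_sqrt (by linarith)
  have hgp : Real.sqrt γ ^ 2 = γ := Real.sq_sqrt hγ0
  have h2p : Real.sqrt 2 ^ 2 = 2 := Real.sq_sqrt (by norm_num)
  have h4 : Real.sqrt 2 ^ 4 = 4 := by
    rw [show (4:ℕ) = 2*2 from rfl, pow_mul, h2p]; norm_num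
  -- Bloch components
  have ha' : a = ![2*t-1, 0, 0] := by
    funext i
    rw [ha i, keyaux t γ ρc ρ' hρc hρ']
    fin_cases i <;>
      simp [pauli, plusV, minusV, AD0, AD1, Matrix.mulVec, dotProduct, Fin.sum_univ_two,
        Matrix.one_apply, Complex.star_def, Complex.conj_ofReal] <;>
      ring_nf <;>
      simp only [h4, hsp, hgp, h2p] <;> ring
  have hb' : b = ![Real.sqrt (1-γ)*(2*t-1), 0, γ] := by
    funext j
    rw [hb j, keyaux t γ ρc ρ' hρc hρ']
    fin_cases j <;>
      simp [pauli, plusV, minusV, AD0, AD1, Matrix.mulVec, dotProduct, Fin.sum_univ_two,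
        Matrix.one_apply, Complex.star_def, Complex.conj_ofReal] <;>
      ring_nf <;>
      simp only [h4, hsp, hgp, h2p] <;> ring
  have hT' : T = !![Real.sqrt (1-γ), 0, γ*(2*t-1); 0, 0, 0; 0, 0, 0] := by
    ext i j
    rw [hT i j, keyaux t γ ρc ρ' hρc hρ']
    fin_cases i <;> fin_cases j <;>
      simp [pauli, plusV, minusV, AD0, AD1, Matrix.mulVec, dotProduct, Fin.sum_univ_two,
        Matrix.one_apply, Complex.star_def, Complex.conj_ofReal,
        Matrix.vecHead, Matrix.vecTail] <;>
      ring_nf <;>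
      first
      | (simp only [h4, hsp, hgp, h2p]; ring)
      | norm_num
  -- epilogue
  clear ha hb hT hρc hρ'
  set q : ℝ := 2*t - 1 with hq_def
  have hq0 : 0 < q := by simp only [hq_def]; linarith
  have hq1 : q < 1 := by simp only [hq_def]; linarith
  have hR : 0 < (1 - 2*t) ^ 2 * (1 - γ) + γ ^ 2 := by
    rcases lt_or_ge γ (1/2) with h | h
    · nlinarith [sq_nonneg (1 - 2*t), sq_nonneg γ]
    · nlinarith [sq_nonneg (1 - 2*t), mul_nonneg (sq_nonneg (1 - 2*t)) (by linarith : (0:ℝ) ≤ 1 - γ)]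
  set N := Real.sqrt ((1 - 2*t) ^ 2 * (1 - γ) + γ ^ 2) with hN_def
  have hN : 0 < N := Real.sqrt_pos.mpr hR
  have hNne : N ≠ 0 := ne_of_gt hN
  set s := Real.sqrt (1 - γ) with hs_def
  have hs0 : 0 ≤ s := Real.sqrt_nonneg _
  have hbn : norm3 b = N := by
    rw [norm3, hN_def]
    congr 1
    rw [hb', Fin.sum_univ_three]
    simp only [Matrix.cons_val_zero, Matrix.cons_val_one, Matrix.head_cons,
      Matrix.cons_val_two, Matrix.tail_cons]
    rw [mul_pow, hsp]
    ring
  have hdot : ∀ m : Fin 3 → ℝ, dot3 a m = q * m 0 := by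
    intro m
    rw [dot3, ha', Fin.sum_univ_three]
    simp only [Matrix.cons_val_zero, Matrix.cons_val_one, Matrix.head_cons,
      Matrix.cons_val_two, Matrix.tail_cons]
    ring
  have hcross : ∀ m : Fin 3 → ℝ,
      norm3 (cross3 (fun j => ∑ i, T i j * m i) (fun i => b i / norm3 b))
        = s * γ * (1 - q^2) / N * |m 0| := by
    intro m
    have hb2 : (fun i => b i / norm3 b) = ![s*q/N, 0, γ/N] := by
      funext i
      rw [hbn, hb']
      fin_cases i <;> simp [Matrix.vecHead, Matrix.vecTail]
    have e1 : cross3 (fun j => ∑ i, T i j * m i) (fun i => b i / norm3 b)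
        = ![0, s * γ * (q^2 - 1) / N * m 0, 0] := by
      rw [hb2]
      funext k
      fin_cases k <;>
        simp [cross3, hT', Fin.sum_univ_three, Matrix.vecHead, Matrix.vecTail] <;>
        field_simp <;> ring
    rw [e1, norm3, Fin.sum_univ_three]
    simp only [Matrix.cons_val_zero, Matrix.cons_val_one, Matrix.head_cons,
      Matrix.cons_val_two, Matrix.tail_cons]
    have e2 : (0:ℝ)^2 + (s * γ * (q^2 - 1) / N * m 0)^2 + 0^2
        = (s * γ * (1 - q^2) / N * m 0)^2 := by ring
    rw [e2, Real.sqrt_sq_eq_abs, abs_mul]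
    have hco : 0 ≤ s * γ * (1 - q^2) / N :=
      div_nonneg (mul_nonneg (mul_nonneg hs0 hγ0) (by nlinarith)) hN.le
    rw [abs_of_nonneg hco]
  have hvN : v = 2 * t * γ * s / N := hv
  constructor
  · constructor
    · -- membership at m = (-1, 0, 0)
      refine ⟨![(-1:ℝ), 0, 0], ?_, ?_⟩
      · rw [norm3, Fin.sum_univ_three]
        norm_num
        rfl
      · rw [hcross, hdot]
        simp only [Matrix.cons_val_zero]
        rw [hvN]
        have e3 : |1 + q * (-1:ℝ)| = 1 - q := by
          rw [abs_of_pos (by linarith)]; ring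
        rw [e3, show |(-1:ℝ)| = 1 by norm_num]
        have h1q : (1:ℝ) - q ≠ 0 := by linarith
        field_simp
        simp only [hq_def]
        ring
    · -- upper bound
      rintro c ⟨m, hm, rfl⟩
      have hsum : m 0 ^ 2 + m 1 ^ 2 + m 2 ^ 2 = 1 := by
        have h0 : (0:ℝ) ≤ ∑ i, m i ^ 2 := by positivity
        have h1 : (∑ i, m i ^ 2) = 1 := by
          rw [norm3] at hm
          rw [← Real.sq_sqrt h0, hm]; norm_num
        rw [Fin.sum_univ_three] at h1
        exact h1
      have hm0 : |m 0| ≤ 1 := by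
        rw [abs_le]
        constructor <;>
          nlinarith [sq_nonneg (m 0 - 1), sq_nonneg (m 0 + 1), sq_nonneg (m 1), sq_nonneg (m 2)]
      have hm0l := (abs_le.mp hm0).1
      have hm0u := (abs_le.mp hm0).2
      have hden : 0 < 1 + q * m 0 := by nlinarith [mul_nonneg hq0.le (by linarith : (0:ℝ) ≤ 1 + m 0)]
      rw [hcross, hdot, abs_of_pos hden, hvN]
      rw [div_le_div_iff₀ hden hN]
      have hkey : s * γ * (1 - q^2) * |m 0| ≤ 2 * t * γ * s * (1 + q * m 0) := by
        have hsg : 0 ≤ s * γ := mul_nonneg hs0 hγ0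
        rcases abs_cases (m 0) with ⟨he, hpos⟩ | ⟨he, hneg⟩ <;> rw [he] <;> simp only [hq_def]
        · have hin : (0:ℝ) ≤ 1 - m 0 * (3 - 4*t) := by
            nlinarith [mul_nonneg hpos (by linarith : (0:ℝ) ≤ 4*t - 2)]
          nlinarith [mul_nonneg hsg (mul_nonneg (by linarith : (0:ℝ) ≤ 2*t) hin)]
        · nlinarith [mul_nonneg hsg (mul_nonneg (by linarith : (0:ℝ) ≤ 2*t)
            (by linarith : (0:ℝ) ≤ 1 + m 0))]
      have : s * γ * (1 - q^2) / N * |m 0| * N = s * γ * (1 - q^2) * |m 0| := by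
        field_simp
      rw [this]
      linarith [hkey]
  · refine ⟨?_, ?_, ?_⟩
    · intro h; rw [hvN, h]; ring_nf
    · intro h; rw [hvN, hs_def, h]; simp
    · intro h1 h2
      have hspos : 0 < s := by rw [hs_def]; exact Real.sqrt_pos.mpr (by linarith)
      rw [hvN]
      exact div_pos (by nlinarith [mul_pos (mul_pos (show (0:ℝ) < 2*t by linarith) h1) hspos]) hN
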